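/- Let G be a finite connected graph and t ≥ 1. Let d and D be the minimum and maximum, respectively, of γ_{t,1}(Ḡ) over all orientations Ḡ of G. Then for every integer b with d ≤ b ≤ D, there exists an orientation Ḡ_b of G with γ_{t,1}(Ḡ_b) = b. -/

import Mathlib

open Finset

/-- `DReach A n u v`: there is a directed walk of length `n` from `u` to `v`
in the digraph with arc relation `A`. -/
def DReach {V : Type*} (A : V → V → Prop) : ℕ → V → V → Prop
  | 0, u, v => u = v
  | n + 1, u, v => ∃ w, A u w ∧ DReach A n w v

/-- The signal a broadcasting vertex `u` of strength `t` sends to `w`: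
`t - d(u,w)` where `d` is the directed distance (0 if `d(u,w) ≥ t` or `w` unreachable). -/
noncomputable def dsignal {V : Type*} (A : V → V → Prop) (t : ℕ) (u w : V) : ℕ :=
  sSup {m : ℕ | ∃ n : ℕ, DReach A n u w ∧ m = t - n}

/-- The directed reception at `w` from the broadcast set `S` of strength `t`. -/
noncomputable def dreception {V : Type*} [Fintype V] (A : V → V → Prop) (t : ℕ)
    (S : Finset V) (w : V) : ℕ :=
  ∑ v ∈ S, dsignal A t v w

/-- `S` is a directed `(t,r)` broadcast dominating set of the digraph `A`. -/
def IsDomSet {V : Type*} [Fintype V] (A : V → V → Prop) (t r : ℕ) (S : Finset V) : Prop :=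
  ∀ w : V, r ≤ dreception A t S w

/-- The directed `(t,r)` broadcast domination number of the digraph `A`. -/
noncomputable def gamma {V : Type*} [Fintype V] (A : V → V → Prop) (t r : ℕ) : ℕ :=
  sInf {k : ℕ | ∃ S : Finset V, IsDomSet A t r S ∧ S.card = k}

/-- `A` is an orientation of the simple graph `G`: every arc is along an edge of `G`,
and each edge of `G` is directed in exactly one of the two directions. -/
def IsOrientation {V : Type*} (G : SimpleGraph V) (A : V → V → Prop) : Prop :=
  (∀ u v, A u v → G.Adj u v) ∧ ∀ u v, G.Adj u v → (A u v ↔ ¬ A v u)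

/-- `A₁` is obtained from `A₀` by reversing (flipping) a single arc. -/
def OneFlip {V : Type*} (A₀ A₁ : V → V → Prop) : Prop :=
  ∃ a b, A₀ a b ∧ A₁ b a ∧
    ∀ u v, ¬((u = a ∧ v = b) ∨ (u = b ∧ v = a)) → (A₀ u v ↔ A₁ u v)

/-- The star graph on `n` vertices: vertex with value `0` is the center. -/
def starGraph (n : ℕ) : SimpleGraph (Fin n) where
  Adj u v := u ≠ v ∧ (u.val = 0 ∨ v.val = 0)
  symm := by constructor; intro u v h; exact ⟨h.1.symm, h.2.symm⟩
  loopless := by constructor; intro u h; exact h.1 rfl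

open scoped Classical in
/-- The set of ordered pairs where `A` has an arc but `B` does not. -/
noncomputable def ADiff {V : Type*} [Fintype V] (A B : V → V → Prop) : Finset (V × V) :=
  Finset.univ.filter (fun p => A p.1 p.2 ∧ ¬ B p.1 p.2)

lemma dsignal_bddAbove {V : Type*} (A : V → V → Prop) (t : ℕ) (u w : V) :
    BddAbove {m : ℕ | ∃ n : ℕ, DReach A n u w ∧ m = t - n} := by
  refine ⟨t, fun m hm => ?_⟩
  obtain ⟨n, _, rfl⟩ := hm
  exact Nat.sub_le t n

lemma le_dsignal {V : Type*} {A : V → V → Prop} {t n : ℕ} {u w : V}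
    (h : DReach A n u w) : t - n ≤ dsignal A t u w :=
  le_csSup (dsignal_bddAbove A t u w) ⟨n, h, rfl⟩

lemma exists_reach_of_dsignal_pos {V : Type*} {A : V → V → Prop} {t : ℕ} {u w : V}
    (h : 0 < dsignal A t u w) : ∃ n, DReach A n u w ∧ n < t := by
  rcases Set.eq_empty_or_nonempty {m : ℕ | ∃ n : ℕ, DReach A n u w ∧ m = t - n} with he | hne
  · rw [dsignal, he, csSup_empty] at h
    simp at h
  · have hmem := Nat.sSup_mem hne (dsignal_bddAbove A t u w)
    obtain ⟨n, hr, hm⟩ := hmem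
    rw [dsignal, hm] at h
    exact ⟨n, hr, by omega⟩

lemma univ_dom {V : Type*} [Fintype V] (A : V → V → Prop) {t : ℕ} (ht : 1 ≤ t) :
    IsDomSet A t 1 (Finset.univ) := by
  intro w
  have h0 : DReach A 0 w w := rfl
  have h1 : t - 0 ≤ dsignal A t w w := le_dsignal h0
  calc 1 ≤ dsignal A t w w := by omega
    _ ≤ ∑ v ∈ Finset.univ, dsignal A t v w :=
      Finset.single_le_sum (f := fun v => dsignal A t v w)
        (fun i _ => Nat.zero_le _) (Finset.mem_univ w)
    _ = dreception A t Finset.univ w := rfl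

lemma gamma_le_card {V : Type*} [Fintype V] {A : V → V → Prop} {t : ℕ} {S : Finset V}
    (h : IsDomSet A t 1 S) : gamma A t 1 ≤ S.card :=
  Nat.sInf_le ⟨S, h, rfl⟩

lemma exists_dom_card {V : Type*} [Fintype V] (A : V → V → Prop) {t : ℕ} (ht : 1 ≤ t) :
    ∃ S : Finset V, IsDomSet A t 1 S ∧ S.card = gamma A t 1 := by
  have hne : {k : ℕ | ∃ S : Finset V, IsDomSet A t 1 S ∧ S.card = k}.Nonempty :=
    ⟨(Finset.univ : Finset V).card, Finset.univ, univ_dom A ht, rfl⟩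
  exact Nat.sInf_mem hne

/-- Walks transfer across a single flip: either the walk survives, or a shorter
walk from the new head `c` exists. -/
lemma dreach_flip {V : Type*} {A A' : V → V → Prop} {a c : V}
    (hagree : ∀ u v, ¬(u = a ∧ v = c) → A u v → A' u v) :
    ∀ n u w, DReach A n u w → DReach A' n u w ∨ ∃ m, m < n ∧ DReach A' m c w := by
  intro n
  induction n with
  | zero => intro u w h; exact Or.inl h
  | succ n ih =>
    intro u w h
    obtain ⟨x, hux, hxw⟩ := h
    by_cases hcase : u = a ∧ x = c
    · obtain ⟨rfl, rfl⟩ := hcase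
      rcases ih _ _ hxw with h' | ⟨m, hm, h'⟩
      · exact Or.inr ⟨n, Nat.lt_succ_self n, h'⟩
      · exact Or.inr ⟨m, Nat.lt_succ_of_lt hm, h'⟩
    · rcases ih _ _ hxw with h' | ⟨m, hm, h'⟩
      · exact Or.inl ⟨x, hagree _ _ hcase hux, h'⟩
      · exact Or.inr ⟨m, Nat.lt_succ_of_lt hm, h'⟩

lemma gamma_flip_le {V : Type*} [Fintype V] {A A' : V → V → Prop} {a c : V} {t : ℕ}
    (ht : 1 ≤ t) (hagree : ∀ u v, ¬(u = a ∧ v = c) → A u v → A' u v) :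
    gamma A' t 1 ≤ gamma A t 1 + 1 := by
  classical
  obtain ⟨S, hS, hcard⟩ := exists_dom_card A ht
  have hdom : IsDomSet A' t 1 (insert c S) := by
    intro w
    have h1 := hS w
    have h2 : ∃ v ∈ S, 0 < dsignal A t v w := by
      by_contra hcon
      push_neg at hcon
      have : dreception A t S w = 0 :=
        Finset.sum_eq_zero (fun v hv => Nat.le_zero.mp (hcon v hv))
      omega
    obtain ⟨v, hv, hpos⟩ := h2
    obtain ⟨n, hr, hn⟩ := exists_reach_of_dsignal_pos hpos
    rcases dreach_flip hagree n v w hr with h' | ⟨m, hm, h'⟩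
    · have hle : t - n ≤ dsignal A' t v w := le_dsignal h'
      calc 1 ≤ dsignal A' t v w := by omega
        _ ≤ dreception A' t (insert c S) w := by
          unfold dreception
          exact Finset.single_le_sum (f := fun v => dsignal A' t v w)
            (fun i _ => Nat.zero_le _) (Finset.mem_insert_of_mem hv)
    · have hle : t - m ≤ dsignal A' t c w := le_dsignal h'
      calc 1 ≤ dsignal A' t c w := by omega
        _ ≤ dreception A' t (insert c S) w := by
          unfold dreception
          exact Finset.single_le_sum (f := fun v => dsignal A' t v w)
            (fun i _ => Nat.zero_le _) (Finset.mem_insert_self c S)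
  calc gamma A' t 1 ≤ (insert c S).card := gamma_le_card hdom
    _ ≤ S.card + 1 := Finset.card_insert_le c S
    _ = gamma A t 1 + 1 := by omega

lemma flip_orient {V : Type*} {G : SimpleGraph V} {A : V → V → Prop}
    (hA : IsOrientation G A) {a c : V} (hac : A a c) :
    IsOrientation G (fun u v => (u = c ∧ v = a) ∨ (A u v ∧ ¬(u = a ∧ v = c))) := by
  have hadj : G.Adj a c := hA.1 a c hac
  have hne : a ≠ c := hadj.ne
  constructor
  · rintro u v (⟨rfl, rfl⟩ | ⟨h, -⟩)
    · exact hadj.symm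
    · exact hA.1 u v h
  · intro u v huv
    have h1 := hA.2 u v huv
    have h3 : ¬ A c a := (hA.2 a c hadj).mp hac
    by_cases hc1 : u = a ∧ v = c
    · obtain ⟨rfl, rfl⟩ := hc1
      simp [hne, hne.symm, h3, hac]
    · by_cases hc2 : u = c ∧ v = a
      · obtain ⟨rfl, rfl⟩ := hc2
        simp [hne, hne.symm, hac]
      · have e1 : ¬(v = c ∧ u = a) := fun h => hc1 ⟨h.2, h.1⟩
        have e2 : ¬(v = a ∧ u = c) := fun h => hc2 ⟨h.2, h.1⟩
        simp only [hc1, hc2, e1, e2, not_false_eq_true, and_true, false_or]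
        tauto

/-- Intermediate value lemma along flip sequences, by induction on the number of
differing arcs. -/
lemma interp {V : Type*} [Fintype V] (G : SimpleGraph V) {t : ℕ} (ht : 1 ≤ t) :
    ∀ k : ℕ, ∀ A B : V → V → Prop, IsOrientation G A → IsOrientation G B →
      (ADiff A B).card ≤ k → ∀ b : ℕ, gamma A t 1 ≤ b → b ≤ gamma B t 1 →
      ∃ C : V → V → Prop, IsOrientation G C ∧ gamma C t 1 = b := by
  classical
  have key : ∀ (A B : V → V → Prop), IsOrientation G A → IsOrientation G B →
      (ADiff A B).card = 0 → A = B := by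
    intro A B hA hB h0
    have hemp : ∀ u v, A u v → B u v := by
      intro u v huv
      by_contra hb
      have : (u, v) ∈ ADiff A B := by
        simp [ADiff, huv, hb]
      rw [Finset.card_eq_zero.mp h0] at this
      exact absurd this (Finset.notMem_empty _)
    funext u v
    apply propext
    constructor
    · exact hemp u v
    · intro hbuv
      by_contra ha
      have hadj : G.Adj u v := hB.1 u v hbuv
      have h4 : A v u := by
        by_contra h5
        exact ha ((hA.2 u v hadj).mpr h5)
      have h6 : B v u := hemp v u h4
      exact (hB.2 u v hadj).mp hbuv h6
  intro k
  induction k with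
  | zero =>
    intro A B hA hB hcard b hb1 hb2
    have hAB : A = B := key A B hA hB (Nat.le_zero.mp hcard)
    subst hAB
    exact ⟨A, hA, le_antisymm hb1 hb2⟩
  | succ k ih =>
    intro A B hA hB hcard b hb1 hb2
    by_cases hbeq : gamma A t 1 = b
    · exact ⟨A, hA, hbeq⟩
    · have hblt : gamma A t 1 < b := lt_of_le_of_ne hb1 hbeq
      have hne0 : (ADiff A B).card ≠ 0 := by
        intro h0
        have := key A B hA hB h0
        subst this
        omega
      obtain ⟨⟨a, c⟩, hmem⟩ := Finset.card_pos.mp (Nat.pos_of_ne_zero hne0)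
      have hmem' : A a c ∧ ¬ B a c := by
        simpa [ADiff] using hmem
      obtain ⟨hac, hnbac⟩ := hmem'
      have hadj : G.Adj a c := hA.1 a c hac
      have hnAca : ¬ A c a := (hA.2 a c hadj).mp hac
      have hBca : B c a := by
        by_contra h
        exact hnbac ((hB.2 a c hadj).mpr h)
      set A' : V → V → Prop := fun u v => (u = c ∧ v = a) ∨ (A u v ∧ ¬(u = a ∧ v = c))
        with hA'def
      have hA' : IsOrientation G A' := flip_orient hA hac
      have hagree : ∀ u v, ¬(u = a ∧ v = c) → A u v → A' u v :=
        fun u v h huv => Or.inr ⟨huv, h⟩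
      have hgle : gamma A' t 1 ≤ gamma A t 1 + 1 := gamma_flip_le ht hagree
      have hsub : ADiff A' B ⊆ (ADiff A B).erase (a, c) := by
        intro ⟨u, v⟩ hm
        have hm' : A' u v ∧ ¬ B u v := by simpa [ADiff] using hm
        rcases hm'.1 with ⟨rfl, rfl⟩ | ⟨huv, hnuv⟩
        · exact absurd hBca hm'.2
        · refine Finset.mem_erase.mpr ⟨?_, by simp [ADiff, huv, hm'.2]⟩
          intro heq
          apply hnuv
          exact ⟨congrArg Prod.fst heq, congrArg Prod.snd heq⟩
      have hcard' : (ADiff A' B).card ≤ k := by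
        have h1 := Finset.card_le_card hsub
        have h2 := Finset.card_erase_of_mem hmem
        have h3 : 1 ≤ (ADiff A B).card := Finset.card_pos.mpr ⟨_, hmem⟩
        omega
      exact ih A' B hA' hB hcard' b (by omega) hb2

theorem stmt1 {V : Type*} [Fintype V] (G : SimpleGraph V) (hconn : G.Connected)
    (t : ℕ) (ht : 1 ≤ t) (d D : ℕ)
    (hd : IsLeast {k : ℕ | ∃ A : V → V → Prop, IsOrientation G A ∧ gamma A t 1 = k} d)
    (hD : IsGreatest {k : ℕ | ∃ A : V → V → Prop, IsOrientation G A ∧ gamma A t 1 = k} D) :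
    ∀ b : ℕ, d ≤ b → b ≤ D →
      ∃ A : V → V → Prop, IsOrientation G A ∧ gamma A t 1 = b := by
  obtain ⟨⟨Ad, hAd, hgd⟩, -⟩ := hd
  obtain ⟨⟨AD, hAD, hgD⟩, -⟩ := hD
  intro b hb1 hb2
  exact interp G ht (ADiff Ad AD).card Ad AD hAd hAD le_rfl b
    (hgd ▸ hb1) (hgD ▸ hb2)
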